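/- For L = 1, a set S is a feasible bootstrap solution if and only if every directed path between two red vertices (with exactly 2 red vertices: the endpoints) contains a non-final vertex in S; equivalently, S separates, for every ordered pair of red vertices (u, v), all u-to-v paths whose internal vertices are all blue, by containing u or an internal blue vertex of the path. -/

import Mathlib

/-- Colors of vertices in the circuit DAG. -/
inductive Color where
  | white | blue | red
deriving DecidableEq

variable {V : Type*}

/-- Number of red vertices on a path (given as a list of vertices). -/
def redCount (color : V → Color) (p : List V) : ℕ :=
  (p.filter (fun v => decide (color v = Color.red))).length

/-- In-neighbors of a vertex. -/
def preds [Fintype V] [DecidableEq V] (E : V → V → Prop) [DecidableRel E] (v : V) : Finset V :=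
  Finset.univ.filter (fun u => E u v)

/-- `ℓ` satisfies the recursive definition of the noise level w.r.t. the marked set `S`:
white vertices have level 0, blue vertices the max over in-edges of `ℓ(u)·𝟙[u ∉ S]`,
red vertices that max plus one. -/
def NoiseRec [Fintype V] [DecidableEq V] (E : V → V → Prop) [DecidableRel E]
    (color : V → Color) (S : Finset V) (ℓ : V → ℕ) : Prop :=
  ∀ v : V,
    ℓ v = if color v = Color.white then 0
          else (preds E v).sup (fun u => if u ∈ S then 0 else ℓ u) +
               (if color v = Color.red then 1 else 0)

set_option linter.unusedSectionVars false

section Aux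

variable [Fintype V] [DecidableEq V] {E : V → V → Prop} [DecidableRel E]
  {color : V → Color} {S : Finset V} {ℓ : V → ℕ}

lemma mem_preds' {u v : V} (h : E u v) : u ∈ preds E v := by
  simp [preds, h]

lemma step_le (hrec : NoiseRec E color S ℓ) {u v : V} (h : E u v) (hu : u ∉ S)
    (hcv : color v ≠ Color.white) :
    ℓ u + (if color v = Color.red then 1 else 0) ≤ ℓ v := by
  rw [hrec v, if_neg hcv]
  have := Finset.le_sup (f := fun u => if u ∈ S then 0 else ℓ u) (mem_preds' h)
  simp only [hu, if_false] at this
  omega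

lemma red_one (hrec : NoiseRec E color S ℓ) {v : V} (hv : color v = Color.red) : 1 ≤ ℓ v := by
  rw [hrec v]
  simp [hv]

lemma exists_pred (hrec : NoiseRec E color S ℓ) {v : V} {k : ℕ} (hk : 1 ≤ k)
    (hcv : color v ≠ Color.white)
    (hv : k + (if color v = Color.red then 1 else 0) ≤ ℓ v) :
    ∃ u, E u v ∧ u ∉ S ∧ k ≤ ℓ u := by
  rw [hrec v, if_neg hcv] at hv
  have hsup : k ≤ (preds E v).sup (fun u => if u ∈ S then 0 else ℓ u) := by
    by_cases h : color v = Color.red <;> simp [h] at hv <;> omega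
  rw [Finset.le_sup_iff (show (⊥ : ℕ) < k from hk)] at hsup
  obtain ⟨u, hu, hku⟩ := hsup
  have huE : E u v := by simpa [preds] using hu
  have huS : u ∉ S := by
    intro h
    simp [h] at hku
    omega
  exact ⟨u, huE, huS, by simpa [huS] using hku⟩

lemma tail_pred : ∀ (p : List V), p.Chain' E → ∀ z ∈ p.tail, ∃ u, E u z
  | [], _, z, hz => by simp at hz
  | [_], _, z, hz => by simp at hz
  | x :: y :: t, hch, z, hz => by
    rcases List.mem_cons.mp hz with rfl | hz'
    · exact ⟨x, (List.isChain_cons_cons.mp hch).1⟩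
    · exact tail_pred (y :: t) (List.isChain_cons_cons.mp hch).2 z hz'

lemma fwd_chain (hrec : NoiseRec E color S ℓ) :
    ∀ (p : List V) (h : p ≠ []), p.Chain' E → (∀ z ∈ p.tail, color z = Color.blue) →
      (∀ z ∈ p, z ∉ S) → 1 ≤ ℓ (p.head h) → 1 ≤ ℓ (p.getLast h)
  | [], h, _, _, _, _ => absurd rfl h
  | [_], _, _, _, _, hx => by simpa using hx
  | x :: y :: t, _, hch, hblue, hS, hx => by
    have hxy := (List.isChain_cons_cons.mp hch).1
    have hy : color y = Color.blue := hblue y (by simp)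
    have h1 : 1 ≤ ℓ y := by
      have hle := step_le hrec hxy (hS x (by simp)) (by simp [hy])
      simp only [List.head_cons] at hx
      simp [hy] at hle
      omega
    have := fwd_chain hrec (y :: t) (by simp) (List.isChain_cons_cons.mp hch).2
      (fun z hz => hblue z (List.mem_cons_of_mem y hz))
      (fun z hz => hS z (List.mem_cons_of_mem x hz)) (by simpa using h1)
    simpa [List.getLast_cons] using this

lemma exists_path1 (hdag : WellFounded E) (hrec : NoiseRec E color S ℓ) :
    ∀ v : V, v ∉ S → 1 ≤ ℓ v →
      ∃ (p : List V) (h : p ≠ []), p.Chain' E ∧ p.getLast h = v ∧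
        color (p.head h) = Color.red ∧ (∀ z ∈ p.tail, color z = Color.blue) ∧
        ∀ z ∈ p, z ∉ S := by
  intro v
  induction v using WellFounded.induction hdag with
  | _ v ih => ?_
  intro hvS hv
  cases hc : color v with
  | white =>
    rw [hrec v] at hv
    simp [hc] at hv
  | red =>
    exact ⟨[v], by simp, List.isChain_singleton v, by simp, by simpa using hc, by simp,
      by simpa using hvS⟩
  | blue =>
    have hcw : color v ≠ Color.white := by simp [hc]
    obtain ⟨u, huv, huS, hu1⟩ := exists_pred hrec le_rfl hcw (by simp [hc]; omega)
    obtain ⟨p, h, hch, hlast, hhead, hblue, hS⟩ := ih u huv huS hu1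
    obtain ⟨x, t, rfl⟩ := List.exists_cons_of_ne_nil h
    refine ⟨x :: (t ++ [v]), by simp, ?_, ?_, by simpa using hhead, ?_, ?_⟩
    · rw [← List.cons_append]
      change List.IsChain E _
      rw [List.isChain_append]
      refine ⟨hch, List.isChain_singleton v, ?_⟩
      intro a ha b hb
      rw [List.getLast?_eq_getLast h] at ha
      simp only [List.head?_cons, Option.mem_some_iff] at ha hb
      subst ha; subst hb
      rw [hlast]
      exact huv
    · exact (List.getLast_concat : ((x :: t) ++ [v]).getLast (by simp) = v)
    · intro z hz
      simp only [List.tail_cons, List.mem_append, List.mem_singleton] at hz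
      rcases hz with hz | rfl
      · exact hblue z (by simpa using hz)
      · exact hc
    · intro z hz
      simp only [← List.cons_append, List.mem_append, List.mem_singleton] at hz
      rcases hz with hz | rfl
      · exact hS z hz
      · exact hvS

lemma exists_path2 (hdag : WellFounded E) (hrec : NoiseRec E color S ℓ) :
    ∀ v : V, 2 ≤ ℓ v →
      ∃ (p : List V) (h : p ≠ []), p.Chain' E ∧ color (p.head h) = Color.red ∧
        color (p.getLast h) = Color.red ∧ redCount color p = 2 ∧
        (∀ z ∈ (p.drop 1).dropLast, color z = Color.blue) ∧
        (∀ z ∈ p.dropLast, z ∉ S) ∧ 2 ≤ p.length ∧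
        p.head h ∈ p.dropLast ∧ (∀ z ∈ (p.drop 1).dropLast, z ∈ p.dropLast) := by
  intro v
  induction v using WellFounded.induction hdag with
  | _ v ih => ?_
  intro hv
  cases hc : color v with
  | white =>
    rw [hrec v] at hv
    simp [hc] at hv
  | blue =>
    have hcw : color v ≠ Color.white := by simp [hc]
    obtain ⟨u, huv, huS, hu2⟩ := exists_pred hrec (by norm_num : (1:ℕ) ≤ 2) hcw
      (by simp [hc]; omega)
    exact ih u huv hu2
  | red =>
    have hcw : color v ≠ Color.white := by simp [hc]
    obtain ⟨u, huv, huS, hu1⟩ := exists_pred hrec le_rfl hcw (by simp [hc]; omega)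
    obtain ⟨q, h, hch, hlast, hhead, hblue, hS⟩ := exists_path1 hdag hrec u huS hu1
    obtain ⟨x, t, rfl⟩ := List.exists_cons_of_ne_nil h
    have hfilt : t.filter (fun z => decide (color z = Color.red)) = [] :=
      List.filter_eq_nil_iff.mpr (fun z hz => by simp [hblue z (by simpa using hz)])
    refine ⟨x :: (t ++ [v]), by simp, ?_, by simpa using hhead, ?_, ?_, ?_, ?_, ?_, ?_, ?_⟩
    · rw [← List.cons_append]
      change List.IsChain E _
      rw [List.isChain_append]
      refine ⟨hch, List.isChain_singleton v, ?_⟩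
      intro a ha b hb
      rw [List.getLast?_eq_getLast h] at ha
      simp only [List.head?_cons, Option.mem_some_iff] at ha hb
      subst ha; subst hb
      rw [hlast]
      exact huv
    · have h5 : ((x :: t) ++ [v]).getLast (by simp) = v := List.getLast_concat
      show color (((x :: t) ++ [v]).getLast (by simp)) = Color.red
      rw [h5]
      exact hc
    · simp only [redCount, List.filter_cons, List.filter_append]
      have hx : color x = Color.red := by simpa using hhead
      simp [hx, hc, hfilt]
    · intro z hz
      simp only [List.drop_one, List.tail_cons, List.dropLast_concat] at hz
      exact hblue z (by simpa using hz)
    · intro z hz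
      rw [← List.cons_append, List.dropLast_concat] at hz
      exact hS z hz
    · simp
    · show x ∈ ((x :: t) ++ [v]).dropLast
      rw [List.dropLast_concat]
      simp
    · intro z hz
      simp only [List.drop_one, List.tail_cons, List.dropLast_concat] at hz
      rw [← List.cons_append, List.dropLast_concat]
      simp [hz]

lemma key_lemma (hrec : NoiseRec E color S ℓ) (hP : ∀ v, ℓ v ≤ 1) (p : List V) (h : p ≠ [])
    (hch : p.Chain' E) (hhead : color (p.head h) = Color.red) (hlen : 2 ≤ p.length)
    (hlast : color (p.getLast h) = Color.red)
    (hint : ∀ z ∈ p.tail.dropLast, color z = Color.blue) :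
    ∃ z ∈ p.dropLast, z ∈ S := by
  by_contra hcon
  push_neg at hcon
  have hq : p.dropLast ≠ [] := by
    intro h0
    have := (List.length_dropLast : p.dropLast.length = p.length - 1)
    rw [h0] at this
    simp at this
    omega
  have hdecomp := List.dropLast_append_getLast h
  have hch' : List.Chain' E (p.dropLast ++ [p.getLast h]) := by rw [hdecomp]; exact hch
  change List.IsChain E _ at hch'
  rw [List.isChain_append] at hch'
  obtain ⟨hchq, -, hedge⟩ := hch'
  have hE : E (p.dropLast.getLast hq) (p.getLast h) := by
    apply hedge
    · rw [List.getLast?_eq_getLast hq]; rfl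
    · rfl
  have h1 : 1 ≤ ℓ (p.dropLast.getLast hq) := by
    refine fwd_chain hrec _ hq hchq ?_ hcon ?_
    · intro z hz
      rw [List.tail_dropLast] at hz
      exact hint z hz
    · rw [List.head_dropLast hq]
      exact red_one hrec hhead
  have h2 := step_le hrec hE (hcon _ (List.getLast_mem hq)) (by simp [hlast])
  rw [if_pos hlast] at h2
  have := hP (p.getLast h)
  omega

lemma interior_not_red (p : List V) (h : p ≠ []) (hlen : 2 ≤ p.length)
    (hhead : color (p.head h) = Color.red) (hlast : color (p.getLast h) = Color.red)
    (hrc : redCount color p = 2) : ∀ z ∈ p.tail.dropLast, color z ≠ Color.red := by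
  have ht : p.tail ≠ [] := by
    intro h0
    have := (List.length_tail : p.tail.length = p.length - 1)
    rw [h0] at this
    simp at this
    omega
  have hlast' : color (p.tail.getLast ht) = Color.red := by
    rw [List.getLast_tail]
    exact hlast
  have e4 : p = p.head h :: (p.tail.dropLast ++ [p.tail.getLast ht]) := by
    rw [List.dropLast_append_getLast ht, List.cons_head_tail]
  rw [e4] at hrc
  simp only [redCount, List.filter_cons, List.filter_append] at hrc
  simp [hhead, hlast', hlast] at hrc
  intro z hz hzred
  exact hrc z hz hzred

end Aux

/-- for `L = 1`, `S` is feasible iff every directed path between two red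
vertices containing exactly 2 red vertices (its endpoints) has a non-final vertex in `S`;
equivalently, for every ordered pair of red vertices `(u,v)` and every `u`-to-`v` path whose
internal vertices are all blue, `S` contains `u` or an internal blue vertex of the path. -/
theorem stmt17 [Fintype V] [DecidableEq V] (E : V → V → Prop) [DecidableRel E]
    (color : V → Color) (hdag : WellFounded E)
    (hwhite : ∀ v u : V, color v = Color.white → ¬ E u v)
    (S : Finset V) (ℓ : V → ℕ) (hrec : NoiseRec E color S ℓ) :
    ((∀ v : V, ℓ v ≤ 1) ↔
      ∀ (p : List V) (hp : p ≠ []), p.Chain' E →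
        color (p.head hp) = Color.red → color (p.getLast hp) = Color.red →
        redCount color p = 2 → ∃ z ∈ p.dropLast, z ∈ S) ∧
    ((∀ v : V, ℓ v ≤ 1) ↔
      ∀ (u v : V), color u = Color.red → color v = Color.red →
        ∀ (p : List V) (hp : p ≠ []), p.Chain' E →
          p.head hp = u → p.getLast hp = v → 2 ≤ p.length →
          (∀ z ∈ (p.drop 1).dropLast, color z = Color.blue) →
          u ∈ S ∨ ∃ z ∈ (p.drop 1).dropLast, z ∈ S) := by
  constructor
  · constructor
    · -- feasible → condition A
      intro hP p hp hch hhead hlast hrc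
      have hlen : 2 ≤ p.length := by
        by_contra hl
        push_neg at hl
        interval_cases hcase : p.length
        · exact hp (List.length_eq_zero_iff.mp hcase)
        · obtain ⟨x, hx⟩ := List.length_eq_one_iff.mp hcase
          subst hx
          simp only [List.head_cons] at hhead
          simp [redCount, hhead] at hrc
      refine key_lemma hrec hP p hp hch hhead hlen hlast ?_
      intro z hz
      have hznr := interior_not_red p hp hlen hhead hlast hrc z hz
      have hznw : color z ≠ Color.white := by
        obtain ⟨u, hu⟩ := tail_pred p hch z (List.mem_of_mem_dropLast hz)
        intro hw
        exact hwhite z u hw hu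
      cases hcz : color z with
      | white => exact absurd hcz hznw
      | blue => rfl
      | red => exact absurd hcz hznr
    · -- condition A → feasible
      intro hcond v
      by_contra hv
      push_neg at hv
      obtain ⟨p, h, hch, hhead, hlast, hrc, _, hnS, _, _, _⟩ :=
        exists_path2 hdag hrec v (by omega)
      obtain ⟨z, hz, hzS⟩ := hcond p h hch hhead hlast hrc
      exact hnS z hz hzS
  · constructor
    · -- feasible → condition B
      intro hP u v hu hv p hp hch hheadu hlastv hlen hint
      by_contra hcon
      push_neg at hcon
      obtain ⟨huS, hintS⟩ := hcon
      have hkey := key_lemma hrec hP p hp hch (hheadu ▸ hu) hlen (hlastv ▸ hv)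
        (fun z hz => hint z (by rwa [List.drop_one]))
      obtain ⟨z, hz, hzS⟩ := hkey
      have ht : p.tail ≠ [] := by
        intro h0
        have := (List.length_tail : p.tail.length = p.length - 1)
        rw [h0] at this
        simp at this
        omega
      have hdl : p.dropLast = p.head hp :: p.tail.dropLast := by
        conv_lhs => rw [← List.cons_head_tail hp]
        rw [List.dropLast_cons_of_ne_nil ht]
      rw [hdl] at hz
      rcases List.mem_cons.mp hz with rfl | hz'
      · rw [hheadu] at hzS
        exact huS hzS
      · exact hintS z (by rwa [List.drop_one]) hzS
    · -- condition B → feasible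
      intro hcond v
      by_contra hv
      push_neg at hv
      obtain ⟨p, h, hch, hhead, hlast, _, hint, hnS, hlen, hheadmem, hsub⟩ :=
        exists_path2 hdag hrec v (by omega)
      rcases hcond (p.head h) (p.getLast h) hhead hlast p h hch rfl rfl hlen hint with
        hS | ⟨z, hz, hzS⟩
      · exact hnS _ hheadmem hS
      · exact hnS z (hsub z hz) hzS
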